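/- If x ∈ B(μ), then the topological support of μ is contained in the ω-limit set of x under f: supp(μ) ⊆ ω(x) = ⋂_{N≥0} closure{f^n(x) : n ≥ N}. -/

import Mathlib

open MeasureTheory Filter Topology
open scoped ENNReal NNReal

set_option linter.unusedSectionVars false

variable {M : Type*} [MetricSpace M] [CompactSpace M] [MeasurableSpace M] [BorelSpace M]

/-- The `n`-th empirical measure of `x` under `f`:
`e_n(x) = (1/n) * (dirac x + dirac (f x) + ... + dirac (f^(n-1) x))`. -/
noncomputable def empMeasure (f : M → M) (x : M) (n : ℕ) : Measure M :=
  (n : ℝ≥0∞)⁻¹ • ∑ k ∈ Finset.range n, Measure.dirac (f^[k] x)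

theorem empMeasure_isProbabilityMeasure (f : M → M) (x : M) {n : ℕ} (hn : n ≠ 0) :
    IsProbabilityMeasure (empMeasure f x n) := by
  constructor
  simp only [empMeasure, Measure.smul_apply, Measure.coe_finset_sum, Finset.sum_apply,
    Measure.dirac_apply' _ MeasurableSet.univ, Set.indicator_univ, Pi.one_apply,
    Finset.sum_const, Finset.card_range, nsmul_eq_mul, mul_one, smul_eq_mul]
  exact ENNReal.inv_mul_cancel (by exact_mod_cast hn) (by simp)

/-- The `(n+1)`-st empirical measure of `x` under `f`, bundled as a Borel probability
measure; as `n → ∞` this runs through all the empirical measures `e_n(x)`, `n ≥ 1`. -/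
noncomputable def empProb (f : M → M) (x : M) (n : ℕ) : ProbabilityMeasure M :=
  ⟨empMeasure f x (n + 1), empMeasure_isProbabilityMeasure f x n.succ_ne_zero⟩

/-- The basin `B(μ)` of a Borel probability measure `μ`: the set of points `x` whose
empirical measures `e_n(x)` converge to `μ` in the topology of weak convergence of
probability measures. -/
def basin (f : M → M) (μ : ProbabilityMeasure M) : Set M :=
  {x | Tendsto (fun n => empProb f x n) atTop (𝓝 μ)}

/-- The topological support of `μ`: the points all of whose open neighborhoods have
positive `μ`-measure. -/
def measureSupport (μ : ProbabilityMeasure M) : Set M :=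
  {y | ∀ U : Set M, IsOpen U → y ∈ U → 0 < μ U}

/-- The `ω`-limit set of `x` under `f`: `⋂_{N ≥ 0} closure {f^n x : n ≥ N}`. -/
def omegaLimitSet (f : M → M) (x : M) : Set M :=
  ⋂ N : ℕ, closure {y | ∃ n, N ≤ n ∧ f^[n] x = y}

/-- if `x ∈ B(μ)` then `supp μ ⊆ ω(x)`. -/
theorem support_subset_omegaLimit (f : M → M) (hf : Continuous f)
    (μ : ProbabilityMeasure M) (x : M) (hx : x ∈ basin f μ) :
    measureSupport μ ⊆ omegaLimitSet f x := by
  intro y hy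
  rw [omegaLimitSet, Set.mem_iInter]
  intro N
  by_contra hyc
  set S := {z | ∃ n, N ≤ n ∧ f^[n] x = z} with hS
  set U := (closure S)ᶜ with hUdef
  have hUopen : IsOpen U := isClosed_closure.isOpen_compl
  have hpos : 0 < μ U := hy U hUopen hyc
  have hUmeas : MeasurableSet U := hUopen.measurableSet
  -- each empirical measure gives U mass at most N / m
  have key : ∀ m : ℕ, (empMeasure f x m) U ≤ (N : ℝ≥0∞) * (m : ℝ≥0∞)⁻¹ := by
    intro m
    rw [empMeasure]
    simp only [Measure.smul_apply, Measure.coe_finset_sum, Finset.sum_apply, smul_eq_mul]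
    rw [mul_comm]
    refine mul_le_mul_left ?_ _
    have hterm : ∀ k ∈ Finset.range m,
        Measure.dirac (f^[k] x) U ≤ if k < N then (1 : ℝ≥0∞) else 0 := by
      intro k _
      rw [Measure.dirac_apply' _ hUmeas]
      by_cases hk : k < N
      · simp only [hk, if_true]
        exact Set.indicator_le_self' (fun _ _ => zero_le_one) _ |>.trans (by simp)
      · simp only [hk, if_false]
        have : f^[k] x ∈ S := ⟨k, Nat.le_of_not_lt hk, rfl⟩
        have : f^[k] x ∉ U := fun h => h (subset_closure this)
        simp [Set.indicator_of_notMem this]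
    calc ∑ k ∈ Finset.range m, Measure.dirac (f^[k] x) U
        ≤ ∑ k ∈ Finset.range m, (if k < N then (1 : ℝ≥0∞) else 0) :=
          Finset.sum_le_sum hterm
      _ ≤ ∑ k ∈ Finset.range N, (1 : ℝ≥0∞) := by
          rw [← Finset.sum_filter]
          refine Finset.sum_le_sum_of_subset ?_
          intro k hk
          simp only [Finset.mem_filter, Finset.mem_range] at hk ⊢
          exact hk.2
      _ = (N : ℝ≥0∞) := by simp
  -- hence the empirical masses of U tend to 0
  have htend : Tendsto (fun n : ℕ => ((empProb f x n : Measure M) U)) atTop (𝓝 0) := by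
    have hub : Tendsto (fun n : ℕ => (N : ℝ≥0∞) * ((n + 1 : ℕ) : ℝ≥0∞)⁻¹) atTop (𝓝 0) := by
      have := ENNReal.Tendsto.const_mul
        (ENNReal.tendsto_inv_nat_nhds_zero.comp (tendsto_add_atTop_nat 1))
        (Or.inr (ENNReal.natCast_ne_top N))
      simpa using this
    exact tendsto_of_tendsto_of_tendsto_of_le_of_le tendsto_const_nhds hub
      (fun n => zero_le) (fun n => key (n + 1))
  -- portmanteau: μ U ≤ liminf of empirical masses = 0
  have hle : (μ : Measure M) U ≤ 0 := by
    have := ProbabilityMeasure.le_liminf_measure_open_of_tendsto hx hUopen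
    rwa [htend.liminf_eq] at this
  have : (μ : Measure M) U = 0 := le_antisymm hle zero_le
  rw [← ProbabilityMeasure.ennreal_coeFn_eq_coeFn_toMeasure] at this
  simp only [ENNReal.coe_eq_zero] at this
  exact absurd this hpos.ne'
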